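/- Fix 0 < f ≤ g < ∞ and M > 0. There exist constants γ_q > 0, γ_Λ > 0 and n₁ ≥ 2 (all depending only on f, g, M) such that the following holds for every n ≥ n₁. Let T ∈ T_{f,g} be a phylogeny with n leaves and tree metric d, let λ* ∈ [fg/M², 2M/(f(1 − e^{−5g}))], and let q̂ be a symmetric real-valued function on pairs of distinct leaves satisfying, for all distinct leaves a, b: |q̂(a,b) − e^{−λ*·d(a,b)}| ≤ n^{−γ_q} + e^{−λ*·d(a,b)}·(e^{γ_Λ·d(a,b)/log n} − 1). Define d̂(a,b) = −ln(q̂(a,b)) if q̂(a,b) > 0 and d̂(a,b) = +∞ otherwise. Then d̂ is a (λ*f/5, 5λ*g·log n)-distorted metric for the scaled tree metric λ*·d on the leaves of T. -/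
import Mathlib


open scoped Classical
open Real MeasureTheory

noncomputable section

namespace RAS

variable {V : Type}

/-- The canonical path (as a walk) between two vertices of a tree. -/
def tpath (G : SimpleGraph V) [DecidableEq V] (hG : G.IsTree) (u v : V) : G.Walk u v :=
  ((Classical.choice (hG.isConnected.preconnected u v)).toPath : G.Path u v).1

/-- Tree metric: sum of edge weights along the path. -/
def tdist (G : SimpleGraph V) [DecidableEq V] (hG : G.IsTree) (w : Sym2 V → ℝ) (u v : V) : ℝ :=
  ((tpath G hG u v).edges.map w).sum

/-- Edges of the canonical path. -/
def pathEdges (G : SimpleGraph V) [DecidableEq V] (hG : G.IsTree) (u v : V) :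
    List (Sym2 V) :=
  (tpath G hG u v).edges

/-- A leaf is a vertex of degree 1. -/
def IsLeaf (G : SimpleGraph V) (v : V) : Prop := (G.neighborSet v).ncard = 1

/-- A symmetric edge factor depending on whether the endpoint states agree. -/
def agreeIf {α : Type} (σ : V → α) (A B : ℝ) : Sym2 V → ℝ :=
  Sym2.lift ⟨fun u v => if σ u = σ v then A else B, fun u v => by
    simp only []
    by_cases h : σ u = σ v
    · rw [if_pos h, if_pos h.symm]
    · rw [if_neg h, if_neg (fun hh => h hh.symm)]⟩

/-- Probability mass function of the `r`-state Poisson model on a weighted tree. -/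
def poissonPMF (G : SimpleGraph V) [Fintype V] [DecidableEq V]
    (w : Sym2 V → ℝ) (r : ℕ) (σ : V → Fin r) : ℝ :=
  (r : ℝ)⁻¹ * ∏ e ∈ (Set.toFinite G.edgeSet).toFinset,
      agreeIf σ ((r : ℝ)⁻¹ + (1 - (r : ℝ)⁻¹) * exp (-(w e)))
        ((r : ℝ)⁻¹ * (1 - exp (-(w e)))) e

/-- Probability of an event under a pmf on a finite configuration space. -/
def fprob {Ω : Type} [Fintype Ω] (p : Ω → ℝ) (A : Set Ω) : ℝ :=
  ∑ ω : Ω, if ω ∈ A then p ω else 0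

/-- A phylogeny on `n` labelled leaves: a finite binary tree whose internal
vertices have degree `3`, with positive edge weights. -/
structure Phylo (n : ℕ) where
  V : Type
  fV : Fintype V
  dV : DecidableEq V
  G : SimpleGraph V
  tree : G.IsTree
  leaf : Fin n → V
  leaf_inj : Function.Injective leaf
  leaf_deg : ∀ i, (G.neighborSet (leaf i)).ncard = 1
  internal_deg : ∀ v, v ∉ Set.range leaf → (G.neighborSet v).ncard = 3
  w : Sym2 V → ℝ
  w_pos : ∀ e ∈ G.edgeSet, 0 < w e

attribute [instance] Phylo.fV Phylo.dV

/-- The tree metric between two leaves of a phylogeny. -/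
def Phylo.dist {n : ℕ} (P : Phylo n) (i j : Fin n) : ℝ :=
  tdist P.G P.tree P.w (P.leaf i) (P.leaf j)

/-- `T ∈ 𝒯_{f,g}` : all edge weights lie in `[f,g]`. -/
def Phylo.Regular {n : ℕ} (P : Phylo n) (f g : ℝ) : Prop :=
  ∀ e ∈ P.G.edgeSet, f ≤ P.w e ∧ P.w e ≤ g

/-- One-sided Laplace transform `Φ(s) = E[exp(-sΛ)]` of a scaling random variable. -/
def laplace {Ω : Type} [MeasureSpace Ω] (Λ : Ω → ℝ) (s : ℝ) : ℝ :=
  ∫ ω, exp (-(s * Λ ω))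

/-- Distribution at the leaves of a single site of the generalized Poisson
model `(T,Λ)`: the pmf of the leaf restriction of `σ ~ D[Λ T, r]`, averaged over `Λ`. -/
def leafDist {n : ℕ} (P : Phylo n) {Ω : Type} [MeasureSpace Ω] (Λ : Ω → ℝ)
    (r : ℕ) (s : Fin n → Fin r) : ℝ :=
  ∫ ω, ∑ σ ∈ Finset.univ.filter (fun σ : P.V → Fin r => ∀ i, σ (P.leaf i) = s i),
      poissonPMF P.G (fun e => Λ ω * P.w e) r σ

/-- Assumption A(f,g,M): regular phylogeny and `Φ(M) ≤ exp(-6g)`. -/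
def AssumpA {n : ℕ} (f g M : ℝ) (P : Phylo n) {Ω : Type} [MeasureSpace Ω]
    (Λ : Ω → ℝ) : Prop :=
  P.Regular f g ∧ laplace Λ M ≤ exp (-(6 * g))

/-- Equality of leaf-labelled topologies: a leaf-label preserving graph isomorphism. -/
def TopoEq {n : ℕ} (P P' : Phylo n) : Prop :=
  ∃ φ : P.V ≃ P'.V, (∀ u v, P.G.Adj u v ↔ P'.G.Adj (φ u) (φ v)) ∧
    ∀ i, φ (P.leaf i) = P'.leaf i

end RAS

namespace RAS

/-- A `(τ,Ψ)`-distorted metric for the (finite-valued) leaf metric `D`: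
`D̂` is symmetric with values in `ℝ ∪ {+∞}`, and whenever either `D(u,v)` or
`D̂(u,v)` is smaller than `Ψ + τ` (for distinct leaves `u,v`), `D̂(u,v)` is a
real number within `τ` of `D(u,v)`. -/
def IsDistortedMetric {n : ℕ} (D : Fin n → Fin n → ℝ)
    (Dh : Fin n → Fin n → EReal) (τ Ψ : ℝ) : Prop :=
  (∀ u v, Dh u v = Dh v u) ∧
  ∀ u v, u ≠ v → (D u v < Ψ + τ ∨ Dh u v < ((Ψ + τ : ℝ) : EReal)) →
    ∃ x : ℝ, Dh u v = (x : EReal) ∧ |D u v - x| < τ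

/-- The estimated distance `d̂(a,b) = -ln q̂(a,b)` if `q̂(a,b) > 0`, and `+∞`
otherwise. -/
def dhat {n : ℕ} (q : Fin n → Fin n → ℝ) (a b : Fin n) : EReal :=
  if 0 < q a b then ((-Real.log (q a b) : ℝ) : EReal) else ⊤

end RAS

/-- **Distortion estimation.** Fix `0 < f ≤ g` and `M > 0`.
There are `γ_q, γ_Λ > 0` and `n₁ ≥ 2` (depending only on `f,g,M`) such that
for every `n ≥ n₁`, every phylogeny `T ∈ 𝒯_{f,g}` on `n` leaves, every
`λ* ∈ [fg/M², 2M/(f(1-e^{-5g}))]` and every symmetric `q̂` satisfying the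
stated accuracy bound, the map `d̂ = -ln q̂` (with `+∞` for nonpositive `q̂`)
is a `(λ*f/5, 5λ*g log n)`-distorted metric for `λ*·d`. -/
theorem distortion_estimation (f g M : ℝ) (hf : 0 < f) (hfg : f ≤ g) (hM : 0 < M) :
    ∃ γq : ℝ, 0 < γq ∧ ∃ γΛ : ℝ, 0 < γΛ ∧ ∃ n₁ : ℕ, 2 ≤ n₁ ∧
      ∀ n : ℕ, n₁ ≤ n → ∀ P : RAS.Phylo n, P.Regular f g →
        ∀ lam : ℝ, f * g / M ^ 2 ≤ lam → lam ≤ 2 * M / (f * (1 - Real.exp (-(5 * g)))) →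
          ∀ q : Fin n → Fin n → ℝ, (∀ a b, q a b = q b a) →
            (∀ a b : Fin n, a ≠ b →
              |q a b - Real.exp (-(lam * P.dist a b))| ≤
                (n : ℝ) ^ (-γq) + Real.exp (-(lam * P.dist a b)) *
                  (Real.exp (γΛ * P.dist a b / Real.log n) - 1)) →
            RAS.IsDistortedMetric (fun a b => lam * P.dist a b) (RAS.dhat q)
              (lam * f / 5) (5 * lam * g * Real.log n) := by
  have hg : 0 < g := lt_of_lt_of_le hf hfg
  set lam0 : ℝ := f * g / M ^ 2 with hlam0def
  have hlam0pos : 0 < lam0 := by positivity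
  have hexp5g : Real.exp (-(5 * g)) < 1 := Real.exp_lt_one_iff.mpr (by linarith)
  set lam1 : ℝ := 2 * M / (f * (1 - Real.exp (-(5 * g)))) with hlam1def
  have hlam1pos : 0 < lam1 :=
    div_pos (by linarith) (mul_pos hf (by linarith))
  set K : ℝ := 5 * g + f / 5 with hKdef
  have hKpos : 0 < K := by rw [hKdef]; linarith
  set C : ℝ := 3 * lam1 * K with hCdef
  have hCpos : 0 < C := by rw [hCdef]; positivity
  set τ0 : ℝ := lam0 * f / 5 with hτ0def
  have hτ0pos : 0 < τ0 := by rw [hτ0def]; positivity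
  set δ : ℝ := 1 - Real.exp (-τ0) with hδdef
  have hδpos : 0 < δ := by
    have : Real.exp (-τ0) < 1 := Real.exp_lt_one_iff.mpr (by linarith)
    rw [hδdef]; linarith
  have hδleτ0 : δ ≤ τ0 := by
    have h1 : 1 - τ0 ≤ Real.exp (-τ0) := by
      have := Real.add_one_le_exp (-τ0); linarith
    rw [hδdef]; linarith
  have hlog14 : 0 < Real.log (1 + δ / 4) := Real.log_pos (by linarith)
  set γΛ : ℝ := min (lam0 / 2) (lam0 * Real.log (1 + δ / 4) / C) with hγΛdef
  have hγΛpos : 0 < γΛ := lt_min (by positivity) (by positivity)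
  set γq : ℝ := C + 1 with hγqdef
  have hγqpos : 0 < γq := by rw [hγqdef]; linarith
  set n₁ : ℕ := max 4 (max (Nat.ceil (4 / δ) + 1)
      (Nat.ceil (Real.exp (6 * Real.log 4 / C)) + 1)) with hn₁def
  have hγΛ1 : γΛ ≤ lam0 / 2 := min_le_left _ _
  have hγΛ2 : γΛ ≤ lam0 * Real.log (1 + δ / 4) / C := min_le_right _ _
  have hn₁4 : 4 ≤ n₁ := le_max_left _ _
  have hn₁c1 : Nat.ceil (4 / δ) + 1 ≤ n₁ := le_trans (le_max_left _ _) (le_max_right _ _)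
  have hn₁c2 : Nat.ceil (Real.exp (6 * Real.log 4 / C)) + 1 ≤ n₁ :=
    le_trans (le_max_right _ _) (le_max_right _ _)
  have hn₁2 : 2 ≤ n₁ := le_trans (by norm_num) hn₁4
  clear_value lam0 lam1 K C τ0 δ γΛ γq n₁
  refine ⟨γq, hγqpos, γΛ, hγΛpos, n₁, hn₁2, ?_⟩
  intro n hn P hreg lam hlamlo hlamhi q hqsym hacc
  -- basic facts about n
  have hn4 : (4 : ℝ) ≤ (n : ℝ) := by
    have : (4 : ℕ) ≤ n := le_trans hn₁4 hn
    exact_mod_cast this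
  have hnpos : (0 : ℝ) < (n : ℝ) := by linarith only [hn4]
  set L : ℝ := Real.log n with hLdef
  have hL1 : 1 ≤ L := by
    rw [hLdef, Real.le_log_iff_exp_le hnpos]
    linarith only [Real.exp_one_lt_d9, hn4]
  have hLpos : 0 < L := by linarith only [hL1]
  clear_value L
  have hinv : 1 / (n : ℝ) ≤ δ / 4 := by
    have h1 : (Nat.ceil (4 / δ) + 1 : ℕ) ≤ n := le_trans hn₁c1 hn
    have h0 : (4 / δ : ℝ) ≤ (Nat.ceil (4 / δ) : ℝ) := Nat.le_ceil _
    have h3 : ((Nat.ceil (4 / δ) + 1 : ℕ) : ℝ) ≤ (n : ℝ) := by exact_mod_cast h1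
    push_cast at h3
    have h2 : (4 / δ : ℝ) < n := by linarith only [h0, h3]
    have h4 : 4 < (n:ℝ) * δ := (div_lt_iff₀ hδpos).mp h2
    rw [div_le_div_iff₀ hnpos (by norm_num : (0:ℝ) < 4)]
    nlinarith only [h4]
  have hlogC : 6 * Real.log 4 / C ≤ L := by
    have h1 : (Nat.ceil (Real.exp (6 * Real.log 4 / C)) + 1 : ℕ) ≤ n := le_trans hn₁c2 hn
    have h2 : Real.exp (6 * Real.log 4 / C) < n := by
      have h0 : Real.exp (6 * Real.log 4 / C) ≤ (Nat.ceil (Real.exp (6 * Real.log 4 / C)) : ℝ) :=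
        Nat.le_ceil _
      have h3 : ((Nat.ceil (Real.exp (6 * Real.log 4 / C)) + 1 : ℕ) : ℝ) ≤ (n : ℝ) := by
        exact_mod_cast h1
      push_cast at h3
      linarith only [h0, h3]
    rw [hLdef, Real.le_log_iff_exp_le hnpos]
    linarith only [h2]
  have hexpC6 : Real.exp (-(C / 6 * L)) ≤ 1 / 4 := by
    have h1 : Real.log 4 ≤ C / 6 * L := by
      have h5 := (div_le_iff₀ hCpos).mp hlogC
      linarith only [h5]
    calc Real.exp (-(C / 6 * L)) ≤ Real.exp (-Real.log 4) :=
          Real.exp_le_exp.mpr (by linarith only [h1])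
      _ = 1 / 4 := by
          rw [Real.exp_neg, Real.exp_log (by norm_num : (0:ℝ) < 4)]; norm_num
  have hexpL : Real.exp (-L) = 1 / (n : ℝ) := by
    rw [hLdef, Real.exp_neg, Real.exp_log hnpos, one_div]
  -- facts about lam
  have hlampos : 0 < lam := lt_of_lt_of_le hlam0pos hlamlo
  set τ : ℝ := lam * f / 5 with hτdef
  have hτ0τ : τ0 ≤ τ := by
    rw [hτ0def, hτdef]
    have h5 : lam0 * f ≤ lam * f := mul_le_mul_of_nonneg_right hlamlo (le_of_lt hf)
    linarith only [h5]
  have hτpos : 0 < τ := lt_of_lt_of_le hτ0pos hτ0τ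
  clear_value τ
  have hlamK : lam * K ≤ C / 3 := by
    have h9 : lam * K ≤ lam1 * K := mul_le_mul_of_nonneg_right hlamhi (le_of_lt hKpos)
    linarith only [h9, hCdef]
  have hΨτ : 5 * lam * g * L + τ ≤ C / 3 * L := by
    have h1 : 5 * lam * g * L + τ ≤ lam * K * L := by
      rw [hKdef, hτdef]
      nlinarith only [mul_nonneg (le_of_lt (mul_pos hlampos hf))
        (by linarith only [hL1] : (0:ℝ) ≤ L - 1)]
    have h2 : lam * K * L ≤ C / 3 * L :=
      mul_le_mul_of_nonneg_right hlamK (le_of_lt hLpos)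
    linarith only [h1, h2]
  have hrpow : ((n : ℝ)) ^ (-γq) = Real.exp (-(γq * L)) := by
    rw [Real.rpow_def_of_pos hnpos, ← hLdef]; ring_nf
  -- the key estimate when lam * d ≤ C * L
  have key : ∀ u v : Fin n, u ≠ v → lam * P.dist u v ≤ C * L →
      ∃ x : ℝ, RAS.dhat q u v = (x : EReal) ∧ |lam * P.dist u v - x| < τ := by
    intro u v huv hx
    have hacc' := hacc u v huv
    set d := P.dist u v with hd
    set Q := q u v with hQ
    set x := lam * d with hxdef
    clear_value x Q d
    clear hd hacc hqsym hreg hn P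
    -- bound the rpow term
    have h1 : ((n : ℝ)) ^ (-γq) ≤ Real.exp (-x) * (δ / 4) := by
      rw [hrpow, hγqdef]
      have e1 : Real.exp (-((C + 1) * L)) = Real.exp (-(C * L)) * Real.exp (-L) := by
        rw [← Real.exp_add]; ring_nf
      have e2 : Real.exp (-(C * L)) ≤ Real.exp (-x) := Real.exp_le_exp.mpr (by linarith only [hx])
      have e3 : Real.exp (-L) ≤ δ / 4 := by rw [hexpL]; exact hinv
      calc Real.exp (-((C + 1) * L)) = Real.exp (-(C * L)) * Real.exp (-L) := e1
        _ ≤ Real.exp (-x) * (δ / 4) := by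
            apply mul_le_mul e2 e3 (le_of_lt (Real.exp_pos _)) (le_of_lt (Real.exp_pos _))
    -- bound the multiplicative error term
    have h2 : Real.exp (γΛ * d / L) - 1 ≤ δ / 4 := by
      have hdle : γΛ * d ≤ Real.log (1 + δ / 4) * L := by
        rcases le_or_gt d 0 with hdn | hdp
        · have h5 : γΛ * d ≤ 0 := mul_nonpos_of_nonneg_of_nonpos (le_of_lt hγΛpos) hdn
          nlinarith only [h5, mul_pos hlog14 hLpos]
        · have hγ2 : γΛ ≤ lam0 * Real.log (1 + δ / 4) / C := hγΛ2
          have hld : lam0 * d ≤ C * L := by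
            have h5 : lam0 * d ≤ lam * d := mul_le_mul_of_nonneg_right hlamlo (le_of_lt hdp)
            linarith only [h5, hx, hxdef]
          have h5 : γΛ * d ≤ lam0 * Real.log (1 + δ / 4) / C * d :=
            mul_le_mul_of_nonneg_right hγ2 (le_of_lt hdp)
          have h6 : lam0 * Real.log (1 + δ / 4) / C * d ≤ Real.log (1 + δ / 4) * L := by
            rw [div_mul_eq_mul_div, div_le_iff₀ hCpos]
            nlinarith only [mul_le_mul_of_nonneg_left hld (le_of_lt hlog14)]
          linarith only [h5, h6]
      have h7 : γΛ * d / L ≤ Real.log (1 + δ / 4) := by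
        rw [div_le_iff₀ hLpos]; exact hdle
      have h8 : Real.exp (γΛ * d / L) ≤ 1 + δ / 4 := by
        calc Real.exp (γΛ * d / L) ≤ Real.exp (Real.log (1 + δ / 4)) :=
              Real.exp_le_exp.mpr h7
          _ = 1 + δ / 4 := Real.exp_log (by linarith only [hδpos])
      linarith only [h8]
    have hE : (0 : ℝ) < Real.exp (-x) := Real.exp_pos _
    have herr : |Q - Real.exp (-x)| ≤ Real.exp (-x) * (δ / 2) := by
      have h9 : Real.exp (-x) * (Real.exp (γΛ * d / L) - 1) ≤ Real.exp (-x) * (δ / 4) :=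
        mul_le_mul_of_nonneg_left h2 (le_of_lt hE)
      calc |Q - Real.exp (-x)| ≤ (n : ℝ) ^ (-γq) +
            Real.exp (-x) * (Real.exp (γΛ * d / L) - 1) := hacc'
        _ ≤ Real.exp (-x) * (δ / 4) + Real.exp (-x) * (δ / 4) := by linarith only [h1, h9]
        _ = Real.exp (-x) * (δ / 2) := by ring
    have habs := abs_le.mp herr
    have hexpτ0 : Real.exp (-τ0) = 1 - δ := by rw [hδdef]; ring
    have hQlb : Real.exp (-x) * Real.exp (-τ) < Q := by
      have e1 : Real.exp (-τ) ≤ Real.exp (-τ0) := Real.exp_le_exp.mpr (by linarith only [hτ0τ])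
      have e2 : Real.exp (-x) * Real.exp (-τ) ≤ Real.exp (-x) * (1 - δ) := by
        rw [← hexpτ0]; exact mul_le_mul_of_nonneg_left e1 (le_of_lt hE)
      nlinarith only [habs.1, e2, mul_pos hE hδpos]
    have hQub : Q < Real.exp (-x) * Real.exp τ := by
      have e1 : Real.exp τ0 ≤ Real.exp τ := Real.exp_le_exp.mpr hτ0τ
      have e2 : 1 + τ0 ≤ Real.exp τ0 := by
        linarith only [Real.add_one_le_exp τ0]
      have e3 : 1 + δ / 2 < Real.exp τ := by linarith only [e1, e2, hδleτ0, hδpos]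
      linarith only [habs.2, mul_lt_mul_of_pos_left e3 hE]
    have hQpos : 0 < Q := lt_trans (by positivity) hQlb
    refine ⟨-Real.log Q, ?_, ?_⟩
    · unfold RAS.dhat
      rw [← hQ, if_pos hQpos]
    · rw [abs_sub_lt_iff]
      have hlb : -(x + τ) < Real.log Q := by
        rw [Real.lt_log_iff_exp_lt hQpos]
        calc Real.exp (-(x + τ)) = Real.exp (-x) * Real.exp (-τ) := by
              rw [← Real.exp_add]; ring_nf
          _ < Q := hQlb
      have hub : Real.log Q < τ - x := by
        rw [Real.log_lt_iff_lt_exp hQpos]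
        calc Q < Real.exp (-x) * Real.exp τ := hQub
          _ = Real.exp (τ - x) := by rw [← Real.exp_add]; ring_nf
      constructor <;> linarith only [hlb, hub]
  -- main conclusion
  constructor
  · intro u v
    simp only [RAS.dhat, hqsym u v]
  · intro u v huv hcase
    rcases hcase with h | h
    · apply key u v huv
      have h' : lam * P.dist u v < 5 * lam * g * L + τ := h
      have h2 : C / 3 * L ≤ C * L := by nlinarith only [mul_pos hCpos hLpos]
      linarith only [hΨτ, h', h2]
    · by_cases hQpos : 0 < q u v
      · have hlt : -Real.log (q u v) < 5 * lam * g * L + τ := by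
          unfold RAS.dhat at h
          rw [if_pos hQpos] at h
          exact_mod_cast h
        have hQgt : Real.exp (-(5 * lam * g * L + τ)) < q u v := by
          rw [← Real.lt_log_iff_exp_lt hQpos]
          linarith only [hlt]
        apply key u v huv
        by_contra hx
        push_neg at hx
        have hacc' := hacc u v huv
        set d := P.dist u v with hd
        set x := lam * d with hxdef
        clear_value x d
        clear hd key hacc hqsym hreg hn P
        have hxpos : 0 < x := lt_trans (mul_pos hCpos hLpos) hx
        have hdpos : 0 < d := by
          rcases le_or_gt d 0 with hdn | hdp
          · exfalso
            have h5 : 0 ≤ lam * -d := mul_nonneg (le_of_lt hlampos) (neg_nonneg.mpr hdn)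
            nlinarith only [h5, hxpos, hxdef]
          · exact hdp
        -- upper bound on q u v
        have hub : q u v ≤ Real.exp (-x) + Real.exp (-(γq * L)) +
            Real.exp (γΛ * d / L - x) := by
          have h9 := (abs_le.mp hacc').2
          have e1 : Real.exp (-x) * (Real.exp (γΛ * d / L) - 1) ≤
              Real.exp (γΛ * d / L - x) - 0 := by
            rw [Real.exp_sub]
            have h11 := Real.exp_pos (-x)
            have h10 : Real.exp (γΛ * d / L) / Real.exp x = Real.exp (-x) * Real.exp (γΛ * d / L) := by
              rw [Real.exp_neg]; ring
            rw [h10]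
            nlinarith only [h11]
          rw [hrpow] at h9
          linarith only [h9, e1]
        -- each term is small
        have hhalf : γΛ * d / L ≤ x / 2 := by
          have e1 : γΛ * d ≤ lam0 / 2 * d :=
            mul_le_mul_of_nonneg_right hγΛ1 (le_of_lt hdpos)
          have e2 : lam0 / 2 * d ≤ lam / 2 * d := by
            linarith only [mul_le_mul_of_nonneg_right hlamlo (le_of_lt hdpos)]
          have e3 : lam / 2 * d = x / 2 := by rw [hxdef]; ring
          rw [div_le_iff₀ hLpos]
          nlinarith only [e1, e2, e3, mul_nonneg (le_of_lt hxpos)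
            (by linarith only [hL1] : (0:ℝ) ≤ L - 1)]
        have t1 : Real.exp (γΛ * d / L - x) ≤ Real.exp (-(x / 2)) :=
          Real.exp_le_exp.mpr (by linarith only [hhalf])
        have t2 : Real.exp (-x) ≤ Real.exp (-(x / 2)) :=
          Real.exp_le_exp.mpr (by linarith only [hxpos])
        have t3 : Real.exp (-(x / 2)) ≤ Real.exp (-(C / 3 * L)) * (1 / 4) := by
          have e1 : Real.exp (-(x / 2)) ≤ Real.exp (-(C / 2 * L)) :=
            Real.exp_le_exp.mpr (by linarith only [hx])
          have e2 : Real.exp (-(C / 2 * L)) =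
              Real.exp (-(C / 3 * L)) * Real.exp (-(C / 6 * L)) := by
            rw [← Real.exp_add]; ring_nf
          calc Real.exp (-(x / 2)) ≤ Real.exp (-(C / 3 * L)) * Real.exp (-(C / 6 * L)) := by
                rw [← e2]; exact e1
            _ ≤ Real.exp (-(C / 3 * L)) * (1 / 4) :=
                mul_le_mul_of_nonneg_left hexpC6 (le_of_lt (Real.exp_pos _))
        have t4 : Real.exp (-(γq * L)) ≤ Real.exp (-(C / 3 * L)) * (1 / 4) := by
          have e1 : Real.exp (-(γq * L)) ≤ Real.exp (-(C / 3 * L + L)) := by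
            apply Real.exp_le_exp.mpr
            rw [hγqdef]
            nlinarith only [mul_pos hCpos hLpos]
          have e2 : Real.exp (-(C / 3 * L + L)) =
              Real.exp (-(C / 3 * L)) * Real.exp (-L) := by
            rw [← Real.exp_add]; ring_nf
          have e3 : Real.exp (-L) ≤ 1 / 4 := by
            rw [hexpL]
            have : (1 : ℝ) / n ≤ 1 / 4 := by
              apply div_le_div_of_nonneg_left (by norm_num) (by norm_num) hn4
            exact this
          calc Real.exp (-(γq * L)) ≤ Real.exp (-(C / 3 * L)) * Real.exp (-L) := by
                rw [← e2]; exact e1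
            _ ≤ Real.exp (-(C / 3 * L)) * (1 / 4) :=
                mul_le_mul_of_nonneg_left e3 (le_of_lt (Real.exp_pos _))
        have tthresh : Real.exp (-(C / 3 * L)) ≤ Real.exp (-(5 * lam * g * L + τ)) :=
          Real.exp_le_exp.mpr (by linarith only [hΨτ])
        linarith only [hub, t1, t2, t3, t4, tthresh, hQgt, Real.exp_pos (-(C / 3 * L))]
      · exfalso
        unfold RAS.dhat at h
        rw [if_neg hQpos] at h
        exact (not_top_lt h)
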